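/- A vector θ ∈ ℝ^{L^d} attains the global minimum -d·L^d of f1 if and only if there exists θ̄ ∈ ℝ such that θ_i ≡ θ̄ (mod 2π) for all i ∈ I. -/

import Mathlib

theorem stmt_3 (d L : ℕ) (hd : 0 < d) (hL : 0 < L)
    (N : Fin (L ^ d) → Finset (Fin (L ^ d)))
    (hcard : ∀ i, (N i).card = 2 * d)
    (hsym : ∀ i j, j ∈ N i ↔ i ∈ N j)
    (hconn : ∀ i j : Fin (L ^ d), Relation.ReflTransGen (fun a b => b ∈ N a) i j)
    (θ : Fin (L ^ d) → ℝ) :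
    (-(1 / 2 : ℝ) * ∑ i, ∑ j ∈ N i, Real.cos (θ i - θ j) = -((d : ℝ) * (L : ℝ) ^ d))
    ↔ ∃ θbar : ℝ, ∀ i, ∃ k : ℤ, θ i = θbar + 2 * Real.pi * k := by
  have hpos : 0 < L ^ d := pow_pos hL d
  have hcast : ((L ^ d : ℕ) : ℝ) = (L : ℝ) ^ d := by push_cast; ring
  have key : (-(1 / 2 : ℝ) * ∑ i, ∑ j ∈ N i, Real.cos (θ i - θ j) = -((d : ℝ) * (L : ℝ) ^ d))
      ↔ (∑ i, ∑ j ∈ N i, Real.cos (θ i - θ j) = ∑ i : Fin (L ^ d), (2 * d : ℝ)) := by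
    rw [Finset.sum_const, Finset.card_univ, Fintype.card_fin, nsmul_eq_mul, hcast]
    constructor <;> intro h <;> nlinarith
  rw [key]
  constructor
  · intro h
    -- each inner sum attains its max
    have hle : ∀ i ∈ (Finset.univ : Finset (Fin (L ^ d))),
        ∑ j ∈ N i, Real.cos (θ i - θ j) ≤ (2 * d : ℝ) := by
      intro i _
      calc ∑ j ∈ N i, Real.cos (θ i - θ j) ≤ ∑ j ∈ N i, (1 : ℝ) :=
            Finset.sum_le_sum fun j _ => Real.cos_le_one _
        _ = (2 * d : ℝ) := by rw [Finset.sum_const, hcard i]; push_cast; ring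
    have hall := (Finset.sum_eq_sum_iff_of_le hle).1 h
    have hcos : ∀ i, ∀ j ∈ N i, Real.cos (θ i - θ j) = 1 := by
      intro i j hj
      have hi := hall i (Finset.mem_univ i)
      have h1 : ∑ j ∈ N i, Real.cos (θ i - θ j) = ∑ j ∈ N i, (1 : ℝ) := by
        rw [hi, Finset.sum_const, hcard i]; push_cast; ring
      have := (Finset.sum_eq_sum_iff_of_le (fun j _ => Real.cos_le_one (θ i - θ j))).1 h1
      exact this j hj
    have hdiff : ∀ i, ∀ j ∈ N i, ∃ k : ℤ, θ j = θ i + 2 * Real.pi * k := by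
      intro i j hj
      obtain ⟨n, hn⟩ := (Real.cos_eq_one_iff _).1 (hcos i j hj)
      exact ⟨-n, by push_cast; linarith⟩
    set i0 : Fin (L ^ d) := ⟨0, hpos⟩
    refine ⟨θ i0, fun i => ?_⟩
    have := hconn i0 i
    induction this with
    | refl => exact ⟨0, by push_cast; ring⟩
    | tail _ hbc ih =>
      obtain ⟨k, hk⟩ := ih
      obtain ⟨m, hm⟩ := hdiff _ _ hbc
      exact ⟨k + m, by push_cast; linarith⟩
  · rintro ⟨θbar, hθ⟩
    apply Finset.sum_congr rfl
    intro i _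
    have : ∀ j ∈ N i, Real.cos (θ i - θ j) = 1 := by
      intro j hj
      obtain ⟨ki, hki⟩ := hθ i
      obtain ⟨kj, hkj⟩ := hθ j
      have : θ i - θ j = (ki - kj : ℤ) * (2 * Real.pi) := by push_cast; rw [hki, hkj]; ring
      rw [this, Real.cos_int_mul_two_pi]
    rw [Finset.sum_congr rfl this, Finset.sum_const, hcard i]; push_cast; ring
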